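/- For all natural numbers p and q, the integral of cos(s)^p * sin(s)^q over [0, π] equals zero if and only if p is odd. -/

import Mathlib

open Real

theorem trig_integral_pi_eq_zero_iff (p q : ℕ) :
    (∫ s in (0:ℝ)..π, Real.cos s ^ p * Real.sin s ^ q) = 0 ↔ Odd p := by
  have hcont : Continuous fun s : ℝ => Real.cos s ^ p * Real.sin s ^ q := by
    continuity
  have key : (∫ s in (0:ℝ)..π, Real.cos s ^ p * Real.sin s ^ q)
      = (-1:ℝ)^p * ∫ s in (0:ℝ)..π, Real.cos s ^ p * Real.sin s ^ q := by
    have h1 : (∫ s in (0:ℝ)..π, Real.cos (π - s) ^ p * Real.sin (π - s) ^ q)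
        = ∫ s in (0:ℝ)..π, Real.cos s ^ p * Real.sin s ^ q := by
      rw [intervalIntegral.integral_comp_sub_left
        (fun s => Real.cos s ^ p * Real.sin s ^ q) π]
      simp
    calc (∫ s in (0:ℝ)..π, Real.cos s ^ p * Real.sin s ^ q)
        = ∫ s in (0:ℝ)..π, Real.cos (π - s) ^ p * Real.sin (π - s) ^ q := h1.symm
      _ = ∫ s in (0:ℝ)..π, (-1:ℝ)^p * (Real.cos s ^ p * Real.sin s ^ q) := by
          congr 1; funext s
          rw [Real.cos_pi_sub, Real.sin_pi_sub, neg_pow]; ring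
      _ = (-1:ℝ)^p * ∫ s in (0:ℝ)..π, Real.cos s ^ p * Real.sin s ^ q := by
          rw [intervalIntegral.integral_const_mul]
  constructor
  · intro h0
    by_contra hodd
    have hev : Even p := Nat.not_odd_iff_even.mp hodd
    -- integral is positive for even p
    have pos1 : 0 < ∫ s in (0:ℝ)..(π/2), Real.cos s ^ p * Real.sin s ^ q := by
      apply intervalIntegral.intervalIntegral_pos_of_pos_on
        (hcont.intervalIntegrable _ _)
      · intro x hx
        have hc : 0 < Real.cos x :=
          Real.cos_pos_of_mem_Ioo ⟨by linarith [hx.1, pi_pos], hx.2⟩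
        have hs : 0 < Real.sin x := Real.sin_pos_of_pos_of_lt_pi hx.1
          (by linarith [hx.2, pi_pos])
        positivity
      · linarith [pi_pos]
    have nonneg2 : 0 ≤ ∫ s in (π/2:ℝ)..π, Real.cos s ^ p * Real.sin s ^ q := by
      apply intervalIntegral.integral_nonneg (by linarith [pi_pos])
      intro x hx
      have hc : 0 ≤ Real.cos x ^ p := hev.pow_nonneg _
      have hs : 0 ≤ Real.sin x := Real.sin_nonneg_of_nonneg_of_le_pi
        (by linarith [hx.1, pi_pos]) hx.2
      exact mul_nonneg hc (pow_nonneg hs q)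
    have hsplit : (∫ s in (0:ℝ)..(π/2), Real.cos s ^ p * Real.sin s ^ q)
        + (∫ s in (π/2:ℝ)..π, Real.cos s ^ p * Real.sin s ^ q)
        = ∫ s in (0:ℝ)..π, Real.cos s ^ p * Real.sin s ^ q :=
      intervalIntegral.integral_add_adjacent_intervals
        (hcont.intervalIntegrable _ _) (hcont.intervalIntegrable _ _)
    linarith
  · intro hodd
    rw [hodd.neg_one_pow] at key
    linarith [key]
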